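/- Let a, b be natural numbers with b < a, and let c = b + SET(a), where SET(a) = 2^L - 1 with L the bit-length of a. Then a - b = (a + ¬c) AND SET(a), where ¬c = SET(c) - c denotes tweaked bitwise negation and AND is bitwise conjunction. -/

import Mathlib

/-- `SET a = 2^L - 1` where `L = Nat.size a` is the least `L` with `a < 2^L`. -/
def SET (a : ℕ) : ℕ := 2 ^ Nat.size a - 1

/-- Tweaked bitwise negation. -/
def tneg (a : ℕ) : ℕ := SET a - a

theorem sub_eq_add_tneg_land (a b : ℕ) (h : b < a) :
    a - b = (a + tneg (b + SET a)) &&& SET a := by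
  set L := Nat.size a with hL
  have ha : a < 2 ^ L := Nat.lt_size_self a
  have hL1 : 1 ≤ L := hL ▸ Nat.size_pos.mpr (by omega)
  have hpow : 1 ≤ 2 ^ L := Nat.one_le_two_pow
  unfold SET tneg SET
  rw [← hL]
  rcases Nat.eq_zero_or_pos b with hb | hb
  · subst hb
    have hsz : Nat.size (0 + (2 ^ L - 1)) = L := by
      apply le_antisymm
      · rw [Nat.size_le]; omega
      · have h3 : L - 1 < Nat.size (0 + (2 ^ L - 1)) := by
          rw [Nat.lt_size]
          have : 2 ^ (L - 1) < 2 ^ L := Nat.pow_lt_pow_right (by norm_num) (by omega)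
          omega
        omega
    rw [hsz]
    have h0 : 2 ^ L - 1 - (0 + (2 ^ L - 1)) = 0 := by omega
    rw [h0, Nat.add_zero, Nat.sub_zero, Nat.and_two_pow_sub_one_eq_mod,
      Nat.mod_eq_of_lt ha]
  · have hsz : Nat.size (b + (2 ^ L - 1)) = L + 1 := by
      apply le_antisymm
      · rw [Nat.size_le, pow_succ]; omega
      · rw [Nat.succ_le_iff, Nat.lt_size]; omega
    rw [hsz]
    have h1 : 2 ^ (L + 1) - 1 - (b + (2 ^ L - 1)) = 2 ^ L - b := by
      rw [pow_succ]; omega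
    rw [h1, Nat.and_two_pow_sub_one_eq_mod]
    have h2 : a + (2 ^ L - b) = (a - b) + 2 ^ L := by omega
    rw [h2, Nat.add_mod_right, Nat.mod_eq_of_lt (by omega)]
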